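/- Let C be a real symmetric d×d matrix and Z₀ a real symmetric positive definite d×d matrix. For every t ≥ 0, the matrix M(t) = Z₀⁻¹ + 4∫₀ᵗ e^{4Cs} ds is symmetric positive definite, hence invertible, and the function Z(t) = e^{2Ct} M(t)⁻¹ e^{2Ct} is differentiable in t and solves the matrix Riccati equation Z′(t) = 2(C Z(t) + Z(t) C) − 4 Z(t)², with initial condition Z(0) = Z₀. -/

import Mathlib

open Matrix MeasureTheory intervalIntegral

/-- `Mfun C Z0 t = Z0⁻¹ + 4 ∫₀ᵗ e^{4Cs} ds` (the integral is taken entrywise). -/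
noncomputable def Mfun {d : ℕ} (C Z0 : Matrix (Fin d) (Fin d) ℝ) (t : ℝ) :
    Matrix (Fin d) (Fin d) ℝ :=
  Z0⁻¹ + Matrix.of fun i j =>
    4 * ∫ s in (0:ℝ)..t, (NormedSpace.exp ((4 * s) • C)) i j

/-- `Zfun C Z0 t = e^{2Ct} (Mfun C Z0 t)⁻¹ e^{2Ct}`. -/
noncomputable def Zfun {d : ℕ} (C Z0 : Matrix (Fin d) (Fin d) ℝ) (t : ℝ) :
    Matrix (Fin d) (Fin d) ℝ :=
  NormedSpace.exp ((2 * t) • C) * (Mfun C Z0 t)⁻¹ * NormedSpace.exp ((2 * t) • C)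

section RiccatiAux

open NormedSpace

variable {d : ℕ}

attribute [local instance] Matrix.linftyOpNormedRing Matrix.linftyOpNormedAlgebra

local notation "Mat" => Matrix (Fin d) (Fin d) ℝ

local instance : CompleteSpace Mat := FiniteDimensional.complete ℝ _

/-- The entry projection as a continuous linear map. -/
noncomputable def entryCLM (i j : Fin d) : Mat →L[ℝ] ℝ :=
  LinearMap.toContinuousLinearMap
    { toFun := fun M : Mat => M i j
      map_add' := fun _ _ => rfl
      map_smul' := fun _ _ => rfl }

@[simp] lemma entryCLM_apply (i j : Fin d) (M : Mat) : entryCLM i j M = M i j := rfl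

/-- The identity from the pi type to matrices as a continuous linear map. -/
noncomputable def matCLM : (Fin d → Fin d → ℝ) →L[ℝ] Mat :=
  LinearMap.toContinuousLinearMap
    { toFun := fun M => Matrix.of M
      map_add' := fun _ _ => rfl
      map_smul' := fun _ _ => rfl }

theorem hasDerivAt_entry {f : ℝ → Mat} {f' : Mat} {t : ℝ}
    (h : HasDerivAt f f' t) (i j : Fin d) :
    HasDerivAt (fun s => f s i j) (f' i j) t :=
  (entryCLM i j).hasFDerivAt.comp_hasDerivAt t h

theorem hasDerivAt_ofEntries {f : ℝ → Mat} {f' : Mat} {t : ℝ}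
    (h : ∀ i j, HasDerivAt (fun s => f s i j) (f' i j) t) : HasDerivAt f f' t := by
  have h1 : HasDerivAt (fun s => (Matrix.of.symm (f s) : Fin d → Fin d → ℝ))
      (Matrix.of.symm f') t :=
    hasDerivAt_pi.2 fun i => hasDerivAt_pi.2 fun j => h i j
  exact matCLM.hasFDerivAt.comp_hasDerivAt t h1

theorem contExpSmul (a : ℝ) (C : Mat) : Continuous fun s : ℝ => exp ((a * s) • C) :=
  exp_continuous.comp ((continuous_const.mul continuous_id).smul continuous_const)

theorem hasDerivAt_expSmul (a t : ℝ) (C : Mat) :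
    HasDerivAt (fun s : ℝ => exp ((a * s) • C)) (a • (exp ((a * t) • C) * C)) t := by
  have h1 : HasDerivAt (fun u : ℝ => exp (u • C)) (exp ((a * t) • C) * C) (a * t) :=
    hasDerivAt_exp_smul_const C (a * t)
  have h2 : HasDerivAt (fun s : ℝ => a * s) a t := by
    simpa using (hasDerivAt_id t).const_mul a
  exact h1.scomp t h2

theorem expC_comm (r : ℝ) (C : Mat) : exp (r • C) * C = C * exp (r • C) :=
  ((Commute.refl C).smul_left r).exp_left

theorem exp_four (s : ℝ) (C : Mat) :
    exp ((4 * s) • C) = exp ((2 * s) • C) * exp ((2 * s) • C) := by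
  have h : (4 * s) • C = (2 * s) • C + (2 * s) • C := by
    rw [← add_smul]; ring_nf
  rw [h]
  exact Matrix.exp_add_of_commute _ _ (Commute.refl _)

theorem hasDerivAt_intExp (C : Mat) (t : ℝ) (i j : Fin d) :
    HasDerivAt (fun s : ℝ => ∫ u in (0:ℝ)..s, exp ((4 * u) • C) i j)
      (exp ((4 * t) • C) i j) t := by
  have hc : Continuous fun u : ℝ => exp ((4 * u) • C) i j :=
    (entryCLM i j).continuous.comp (contExpSmul 4 C)
  exact intervalIntegral.integral_hasDerivAt_right (hc.intervalIntegrable _ _)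
    (hc.stronglyMeasurableAtFilter _ _) hc.continuousAt

theorem hasDerivAt_Mfun (C Z0 : Mat) (t : ℝ) :
    HasDerivAt (fun s => Mfun C Z0 s) ((4:ℝ) • exp ((4 * t) • C)) t := by
  apply hasDerivAt_ofEntries
  intro i j
  exact ((hasDerivAt_intExp C t i j).const_mul (4:ℝ)).const_add (Z0⁻¹ i j)

theorem intExp_entry (C : Mat) (t : ℝ) (i j : Fin d) :
    (∫ s in (0:ℝ)..t, exp ((4 * s) • C)) i j
      = ∫ s in (0:ℝ)..t, exp ((4 * s) • C) i j :=
  ((entryCLM i j).intervalIntegral_comp_comm ((contExpSmul 4 C).intervalIntegrable _ _)).symm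

theorem isHermitian_of_isSymm {A : Mat} (h : A.IsSymm) : A.IsHermitian := by
  rwa [Matrix.IsHermitian, Matrix.conjTranspose_eq_transpose_of_trivial]

theorem isSymm_of_isHermitian {A : Mat} (h : A.IsHermitian) : A.IsSymm := by
  rwa [Matrix.IsHermitian, Matrix.conjTranspose_eq_transpose_of_trivial] at h

theorem posSemidef_four_smul_exp {C : Mat} (hC : C.IsSymm) (s : ℝ) :
    ((4:ℝ) • exp ((4 * s) • C)).PosSemidef := by
  have h := Matrix.posSemidef_conjTranspose_mul_self ((2:ℝ) • exp ((2 * s) • C))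
  have hsym : (exp ((2 * s) • C)).IsSymm := by
    have : ((2 * s) • C).IsSymm := by
      rw [Matrix.IsSymm, Matrix.transpose_smul, hC]
    exact this.exp
  have he : ((2:ℝ) • exp ((2 * s) • C))ᴴ = (2:ℝ) • exp ((2 * s) • C) := by
    rw [Matrix.conjTranspose_eq_transpose_of_trivial, Matrix.transpose_smul, hsym]
  rw [he] at h
  have heq : ((2:ℝ) • exp ((2 * s) • C)) * ((2:ℝ) • exp ((2 * s) • C))
      = (4:ℝ) • exp ((4 * s) • C) := by
    rw [exp_four, smul_mul_assoc, mul_smul_comm, smul_smul]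
    norm_num
  rwa [heq] at h

theorem posSemidef_intervalIntegral {f : ℝ → Mat} (hf : Continuous f) {t : ℝ} (ht : 0 ≤ t)
    (h : ∀ s, (f s).PosSemidef) : (∫ s in (0:ℝ)..t, f s).PosSemidef := by
  rw [Matrix.posSemidef_iff_dotProduct_mulVec]
  constructor
  · ext i j
    rw [Matrix.conjTranspose_apply, star_trivial]
    have e1 : (∫ s in (0:ℝ)..t, f s) j i = ∫ s in (0:ℝ)..t, f s j i :=
      ((entryCLM j i).intervalIntegral_comp_comm (hf.intervalIntegrable _ _)).symm
    have e2 : (∫ s in (0:ℝ)..t, f s) i j = ∫ s in (0:ℝ)..t, f s i j :=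
      ((entryCLM i j).intervalIntegral_comp_comm (hf.intervalIntegrable _ _)).symm
    rw [e1, e2]
    refine intervalIntegral.integral_congr fun s _ => ?_
    conv_lhs => rw [← (h s).1]
    rw [Matrix.conjTranspose_apply, star_trivial]
  · intro x
    let q : Mat →L[ℝ] ℝ := LinearMap.toContinuousLinearMap
      { toFun := fun B : Mat => star x ⬝ᵥ (B *ᵥ x)
        map_add' := fun A B => by simp [Matrix.add_mulVec, dotProduct_add]
        map_smul' := fun c A => by
          simp [Matrix.smul_mulVec, dotProduct_smul, smul_eq_mul] }
    have e : star x ⬝ᵥ ((∫ s in (0:ℝ)..t, f s) *ᵥ x)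
        = ∫ s in (0:ℝ)..t, star x ⬝ᵥ (f s *ᵥ x) :=
      (q.intervalIntegral_comp_comm (hf.intervalIntegrable _ _)).symm
    rw [e]
    exact intervalIntegral.integral_nonneg ht fun s _ => (h s).dotProduct_mulVec_nonneg x

theorem Mfun_eq (C Z0 : Mat) (t : ℝ) :
    Mfun C Z0 t = Z0⁻¹ + ∫ s in (0:ℝ)..t, (4:ℝ) • exp ((4 * s) • C) := by
  ext i j
  simp only [Mfun, Matrix.add_apply, Matrix.of_apply, Matrix.smul_apply, smul_eq_mul,
    intervalIntegral.integral_smul]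
  rw [intExp_entry]

theorem Mfun_posDef {C Z0 : Mat} (hC : C.IsSymm) (hZ0pd : Z0.PosDef) {t : ℝ} (ht : 0 ≤ t) :
    (Mfun C Z0 t).PosDef := by
  rw [Mfun_eq]
  exact hZ0pd.inv.add_posSemidef
    (posSemidef_intervalIntegral ((contExpSmul 4 C).const_smul (4:ℝ)) ht
      fun s => posSemidef_four_smul_exp hC s)

theorem Zfun_zero (C Z0 : Mat) (hZ0pd : Z0.PosDef) : Zfun C Z0 0 = Z0 := by
  have h0 : Mfun C Z0 0 = Z0⁻¹ := by
    rw [Mfun_eq]; simp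
  simp [Zfun, h0, Matrix.nonsing_inv_nonsing_inv _ hZ0pd.det_pos.ne'.isUnit,
    NormedSpace.exp_zero]

theorem hasDerivAt_Minv (C Z0 : Mat) {t : ℝ} (hU : IsUnit (Mfun C Z0 t)) :
    HasDerivAt (fun s => (Mfun C Z0 s)⁻¹)
      (-((Mfun C Z0 t)⁻¹ * ((4:ℝ) • exp ((4 * t) • C)) * (Mfun C Z0 t)⁻¹)) t := by
  obtain ⟨u, hu⟩ := hU
  have h1 : HasFDerivAt Ring.inverse
      (-(ContinuousLinearMap.mulLeftRight ℝ Mat ↑u⁻¹ ↑u⁻¹)) (Mfun C Z0 t) :=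
    hu ▸ hasFDerivAt_ringInverse u
  have h2 := h1.comp_hasDerivAt t (hasDerivAt_Mfun C Z0 t)
  have h3 : (Ring.inverse ∘ fun s => Mfun C Z0 s) = fun s => (Mfun C Z0 s)⁻¹ := by
    funext s; rw [Function.comp_apply, Matrix.nonsing_inv_eq_ringInverse]
  rw [h3] at h2
  have hinv : (↑u⁻¹ : Mat) = (Mfun C Z0 t)⁻¹ := by
    rw [Matrix.nonsing_inv_eq_ringInverse, ← hu, Ring.inverse_unit]
  refine h2.congr_deriv ?_
  rw [hinv]
  simp [ContinuousLinearMap.mulLeftRight_apply]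

theorem hasDerivAt_Zfun (C Z0 : Mat) {t : ℝ} (hU : IsUnit (Mfun C Z0 t)) :
    HasDerivAt (fun s => Zfun C Z0 s)
      ((2:ℝ) • (C * Zfun C Z0 t + Zfun C Z0 t * C)
        - (4:ℝ) • (Zfun C Z0 t * Zfun C Z0 t)) t := by
  have hE := hasDerivAt_expSmul 2 t C
  have hN := hasDerivAt_Minv C Z0 hU
  have h := (hE.mul hN).mul hE
  have hfun : ((fun s => exp ((2 * s) • C)) * (fun s => (Mfun C Z0 s)⁻¹) * fun s => exp ((2 * s) • C))
      = fun s => Zfun C Z0 s := by funext s; rw [Zfun]; rfl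
  rw [hfun] at h
  refine h.congr_deriv ?_
  simp only [Zfun, Pi.mul_apply]
  set E := exp ((2 * t) • C) with hEdef
  set N := (Mfun C Z0 t)⁻¹ with hNdef
  rw [exp_four t C, ← hEdef]
  have hcomm : E * C = C * E := expC_comm (2 * t) C
  have hca : E * (C * (N * E)) = C * (E * (N * E)) := by
    rw [← mul_assoc, ← mul_assoc, hcomm]; simp [mul_assoc]
  simp only [smul_mul_assoc, mul_smul_comm, smul_smul, neg_mul, mul_neg, smul_neg,
    smul_add, mul_add, add_mul, sub_eq_add_neg, mul_assoc]
  rw [hca]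
  abel

theorem hasDerivAt_Zfun_entry (C Z0 : Mat) {t : ℝ} (hU : IsUnit (Mfun C Z0 t)) (i j : Fin d) :
    HasDerivAt (fun s => Zfun C Z0 s i j)
      (((2:ℝ) • (C * Zfun C Z0 t + Zfun C Z0 t * C)
        - (4:ℝ) • (Zfun C Z0 t * Zfun C Z0 t)) i j) t :=
  hasDerivAt_entry (hasDerivAt_Zfun C Z0 hU) i j

end RiccatiAux

/-- **Closed-form solution of the matrix Riccati equation.** -/
theorem riccati_closed_form_solution
    (d : ℕ) (C Z0 : Matrix (Fin d) (Fin d) ℝ) (hC : C.IsSymm)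
    (hZ0 : Z0.IsSymm) (hZ0pd : Z0.PosDef) :
    (∀ t : ℝ, 0 ≤ t → (Mfun C Z0 t).IsSymm ∧ (Mfun C Z0 t).PosDef ∧
      IsUnit (Mfun C Z0 t)) ∧
    Zfun C Z0 0 = Z0 ∧
    (∀ t : ℝ, 0 ≤ t → ∀ i j, HasDerivAt (fun s => Zfun C Z0 s i j)
      (((2:ℝ) • (C * Zfun C Z0 t + Zfun C Z0 t * C)
        - (4:ℝ) • (Zfun C Z0 t * Zfun C Z0 t)) i j) t) := by
  refine ⟨fun t ht => ?_, Zfun_zero C Z0 hZ0pd, fun t ht i j => ?_⟩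
  · have pd := Mfun_posDef hC hZ0pd ht
    exact ⟨isSymm_of_isHermitian pd.isHermitian, pd, pd.isUnit⟩
  · exact hasDerivAt_Zfun_entry C Z0 (Mfun_posDef hC hZ0pd ht).isUnit i j
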